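/- (Thomas–Fermi energy of the Bohr atom.) Let q ∈ ℕ, γ_TF = (6π²/q)^{2/3}/2, and N, Z > 0. Then the infimum E^TF_Bohr(N,Z) = inf{ ∫_{ℝ³} ((3/5)γ_TF ρ(x)^{5/3} − (Z/|x|)ρ(x)) dx : ρ ≥ 0, ρ ∈ L^{5/3}(ℝ³), ∫ρ = N } equals −(3/γ_TF)(π²/4)^{2/3} Z² N^{1/3}. Moreover there is a unique minimizer ρ^TF_Bohr, and it satisfies γ_TF ρ^TF_Bohr(x)^{2/3} = (Z/|x| − μ)₊ almost everywhere with μ = (π²/4)^{2/3} γ_TF^{-1} Z² N^{-2/3}. -/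

import Mathlib

open MeasureTheory Real Filter
open Set
open scoped ENNReal

set_option maxHeartbeats 2000000

noncomputable section

/-- Euclidean space `ℝ³`. -/
abbrev E3 := EuclideanSpace ℝ (Fin 3)

/-- The Thomas–Fermi constant `γ_TF = (6π²/q)^{2/3}/2` for `q` spin states. -/
def gammaTF (q : ℕ) : ℝ := (6 * Real.pi ^ 2 / q) ^ ((2 : ℝ) / 3) / 2

/-- The Thomas–Fermi functional of the Bohr atom (single nucleus of charge `Z`,
no electron–electron repulsion): `𝓔^TF_{Z,Bohr}(ρ) = ∫ ((3/5)γ_TF ρ^{5/3} − (Z/|x|)ρ)`. -/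
def bohrFun (q : ℕ) (Z : ℝ) (ρ : E3 → ℝ) : ℝ :=
  ∫ x : E3, ((3 / 5) * gammaTF q * ρ x ^ ((5 : ℝ) / 3) - Z / ‖x‖ * ρ x)

/-- Admissible densities for the Bohr atom with particle number `N`:
`ρ ≥ 0`, `ρ ∈ L^{5/3}(ℝ³)`, `∫ρ = N`. -/
def InBohr (N : ℝ) (ρ : E3 → ℝ) : Prop :=
  (∀ x, 0 ≤ ρ x) ∧ MemLp ρ (5 / 3 : ℝ≥0∞) volume ∧ (∫ x : E3, ρ x) = N




/-- Strict Young-type inequality with equality case. -/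
lemma tf_phi_aux (b : ℝ) (hb : 0 ≤ b) (a : ℝ) (ha : 0 ≤ a) :
    0 ≤ (3/5) * a ^ ((5:ℝ)/3) - b ^ ((2:ℝ)/3) * a + (2/5) * b ^ ((5:ℝ)/3) ∧
    ((3/5) * a ^ ((5:ℝ)/3) - b ^ ((2:ℝ)/3) * a + (2/5) * b ^ ((5:ℝ)/3) = 0 ↔ a = b) := by
  set φ : ℝ → ℝ := fun x => (3/5) * x ^ ((5:ℝ)/3) - b ^ ((2:ℝ)/3) * x + (2/5) * b ^ ((5:ℝ)/3)
    with hφ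
  have hb53 : b ^ ((5:ℝ)/3) = b ^ ((2:ℝ)/3) * b := by
    rw [show (5:ℝ)/3 = 2/3 + 1 by norm_num, Real.rpow_add' hb (by norm_num), Real.rpow_one]
  have hφb : φ b = 0 := by simp only [hφ, hb53]; ring
  have hderiv : ∀ x : ℝ, HasDerivAt φ (x ^ ((2:ℝ)/3) - b ^ ((2:ℝ)/3)) x := by
    intro x
    have h1 : HasDerivAt (fun x : ℝ => x ^ ((5:ℝ)/3)) ((5:ℝ)/3 * x ^ ((5:ℝ)/3 - 1)) x :=
      Real.hasDerivAt_rpow_const (Or.inr (by norm_num))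
    have h2 := ((h1.const_mul ((3:ℝ)/5)).sub ((hasDerivAt_id x).const_mul
      (b ^ ((2:ℝ)/3)))).add_const ((2:ℝ)/5 * b ^ ((5:ℝ)/3))
    have : (3:ℝ)/5 * ((5:ℝ)/3 * x ^ ((5:ℝ)/3 - 1)) - b ^ ((2:ℝ)/3) * 1
        = x ^ ((2:ℝ)/3) - b ^ ((2:ℝ)/3) := by
      rw [show (5:ℝ)/3 - 1 = 2/3 by norm_num]; ring
    rw [this] at h2
    exact h2
  have hcont : Continuous φ := by
    have : Continuous fun x : ℝ => x ^ ((5:ℝ)/3) := by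
      rw [continuous_iff_continuousAt]
      exact fun x => Real.continuousAt_rpow_const x _ (Or.inr (by norm_num))
    fun_prop
  have hmono : StrictMonoOn φ (Set.Ici b) := by
    apply strictMonoOn_of_deriv_pos (convex_Ici b) hcont.continuousOn
    intro x hx
    rw [interior_Ici] at hx
    rw [(hderiv x).deriv]
    have : b ^ ((2:ℝ)/3) < x ^ ((2:ℝ)/3) := Real.rpow_lt_rpow hb hx (by norm_num)
    linarith
  have hanti : StrictAntiOn φ (Set.Icc 0 b) := by
    apply strictAntiOn_of_deriv_neg (convex_Icc 0 b) hcont.continuousOn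
    intro x hx
    rw [interior_Icc] at hx
    rw [(hderiv x).deriv]
    have : x ^ ((2:ℝ)/3) < b ^ ((2:ℝ)/3) := Real.rpow_lt_rpow hx.1.le hx.2 (by norm_num)
    linarith
  have key : ∀ x : ℝ, 0 ≤ x → x ≠ b → 0 < φ x := by
    intro x hx hne
    rcases lt_or_gt_of_ne hne with h | h
    · have := hanti ⟨hx, h.le⟩ ⟨hb, le_refl b⟩ h
      rw [hφb] at this; exact this
    · have := hmono (Set.self_mem_Ici) (Set.mem_Ici.2 h.le) h
      rw [hφb] at this; exact this
  constructor
  · rcases eq_or_ne a b with rfl | hne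
    · rw [show (3:ℝ)/5 * a ^ ((5:ℝ)/3) - a ^ ((2:ℝ)/3) * a + 2/5 * a ^ ((5:ℝ)/3) = φ a from rfl,
        hφb]
    · exact (key a ha hne).le
  · constructor
    · intro h
      by_contra hne
      exact absurd h (ne_of_gt (key a ha hne))
    · intro h; subst h; simpa using hφb

/-- Pointwise master inequality for the TF integrand, with equality case. -/
lemma tf_master (γ : ℝ) (hγ : 0 < γ) (t a : ℝ) (ha : 0 ≤ a) :
    -((2/5) * (γ ^ ((3:ℝ)/2))⁻¹ * (max t 0) ^ ((5:ℝ)/2)) ≤ (3/5) * γ * a ^ ((5:ℝ)/3) - t * a ∧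
    ((3/5) * γ * a ^ ((5:ℝ)/3) - t * a
        = -((2/5) * (γ ^ ((3:ℝ)/2))⁻¹ * (max t 0) ^ ((5:ℝ)/2)) ↔
      a = (γ ^ ((3:ℝ)/2))⁻¹ * (max t 0) ^ ((3:ℝ)/2)) := by
  set T := max t 0 with hT
  have hT0 : 0 ≤ T := le_max_right _ _
  have htT : t ≤ T := le_max_left _ _
  set c : ℝ := (γ ^ ((3:ℝ)/2))⁻¹ with hc
  have hγ32 : 0 < γ ^ ((3:ℝ)/2) := Real.rpow_pos_of_pos hγ _
  have hc0 : 0 < c := inv_pos.2 hγ32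
  set b : ℝ := c * T ^ ((3:ℝ)/2) with hbdef
  have hb0 : 0 ≤ b := mul_nonneg hc0.le (Real.rpow_nonneg hT0 _)
  -- key power identities
  have hT32 : (T ^ ((3:ℝ)/2)) ^ ((2:ℝ)/3) = T := by
    rw [← Real.rpow_mul hT0]; norm_num
  have hγc : (c : ℝ) ^ ((2:ℝ)/3) = γ⁻¹ := by
    rw [hc, Real.inv_rpow (Real.rpow_nonneg hγ.le _), ← Real.rpow_mul hγ.le]
    norm_num [Real.rpow_one]
  have hb23 : γ * b ^ ((2:ℝ)/3) = T := by
    rw [hbdef, Real.mul_rpow hc0.le (Real.rpow_nonneg hT0 _), hT32, hγc]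
    field_simp
  have hb53 : γ * b ^ ((5:ℝ)/3) = c * T ^ ((5:ℝ)/2) := by
    have h1 : b ^ ((5:ℝ)/3) = b ^ ((2:ℝ)/3) * b := by
      rw [show (5:ℝ)/3 = 2/3 + 1 by norm_num, Real.rpow_add' hb0 (by norm_num), Real.rpow_one]
    have h2 : T ^ ((5:ℝ)/2) = T * T ^ ((3:ℝ)/2) := by
      rw [show (5:ℝ)/2 = 1 + 3/2 by norm_num, Real.rpow_add' hT0 (by norm_num), Real.rpow_one]
    rw [h1, ← mul_assoc, hb23, hbdef, h2]; ring
  have hphi := tf_phi_aux b hb0 a ha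
  have hsplit : (3/5) * γ * a ^ ((5:ℝ)/3) - t * a + (2/5) * c * T ^ ((5:ℝ)/2)
      = γ * ((3/5) * a ^ ((5:ℝ)/3) - b ^ ((2:ℝ)/3) * a + (2/5) * b ^ ((5:ℝ)/3)) + (T - t) * a := by
    have : γ * ((3/5) * a ^ ((5:ℝ)/3) - b ^ ((2:ℝ)/3) * a + (2/5) * b ^ ((5:ℝ)/3))
        = (3/5) * γ * a ^ ((5:ℝ)/3) - (γ * b ^ ((2:ℝ)/3)) * a + (2/5) * (γ * b ^ ((5:ℝ)/3)) := by
      ring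
    rw [this, hb23, hb53]; ring
  have hTa : 0 ≤ (T - t) * a := mul_nonneg (by linarith) ha
  have hγφ : 0 ≤ γ * ((3/5) * a ^ ((5:ℝ)/3) - b ^ ((2:ℝ)/3) * a + (2/5) * b ^ ((5:ℝ)/3)) :=
    mul_nonneg hγ.le hphi.1
  constructor
  · linarith [hsplit, hTa, hγφ]
  · constructor
    · intro h
      have hsum : γ * ((3/5) * a ^ ((5:ℝ)/3) - b ^ ((2:ℝ)/3) * a + (2/5) * b ^ ((5:ℝ)/3))
          + (T - t) * a = 0 := by linarith [hsplit]
      have hφ0 : γ * ((3/5) * a ^ ((5:ℝ)/3) - b ^ ((2:ℝ)/3) * a + (2/5) * b ^ ((5:ℝ)/3)) = 0 := by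
        linarith
      have : (3/5) * a ^ ((5:ℝ)/3) - b ^ ((2:ℝ)/3) * a + (2/5) * b ^ ((5:ℝ)/3) = 0 := by
        rcases mul_eq_zero.1 hφ0 with h | h
        · exact absurd h hγ.ne'
        · exact h
      exact hphi.2.1 this
    · intro h
      have hab : a = b := h
      have hφ0 : (3/5) * a ^ ((5:ℝ)/3) - b ^ ((2:ℝ)/3) * a + (2/5) * b ^ ((5:ℝ)/3) = 0 :=
        hphi.2.2 hab
      have hTta : (T - t) * a = 0 := by
        rcases le_or_gt 0 t with h0 | h0
        · have : T = t := max_eq_left h0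
          rw [this]; ring
        · have hT' : T = 0 := max_eq_right h0.le
          have : b = 0 := by rw [hbdef, hT', Real.zero_rpow (by norm_num), mul_zero]
          rw [hab, this, mul_zero]
      have hz : (3/5) * γ * a ^ ((5:ℝ)/3) - t * a + (2/5) * c * T ^ ((5:ℝ)/2) = 0 := by
        rw [hsplit, hφ0, hTta, mul_zero]; ring
      linarith [hz]



/-- Real Beta integral in terms of the Gamma function. -/
lemma tf_realBeta (a b : ℝ) (ha : 0 < a) (hb : 0 < b) :
    ∫ s in (0:ℝ)..1, s ^ (a - 1) * (1 - s) ^ (b - 1)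
      = Real.Gamma a * Real.Gamma b / Real.Gamma (a + b) := by
  have hG := Complex.Gamma_mul_Gamma_eq_betaIntegral
    (s := (a:ℂ)) (t := (b:ℂ)) (by simpa using ha) (by simpa using hb)
  have hbeta : Complex.betaIntegral (a:ℂ) (b:ℂ)
      = ((∫ s in (0:ℝ)..1, s ^ (a - 1) * (1 - s) ^ (b - 1) : ℝ) : ℂ) := by
    rw [Complex.betaIntegral]
    rw [show ∫ (x : ℝ) in (0:ℝ)..1, (x:ℂ) ^ ((a:ℂ) - 1) * ((1:ℂ) - (x:ℂ)) ^ ((b:ℂ) - 1)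
        = ∫ (x : ℝ) in (0:ℝ)..1, ((x ^ (a - 1) * (1 - x) ^ (b - 1) : ℝ) : ℂ) from ?_,
      intervalIntegral.integral_ofReal]
    apply intervalIntegral.integral_congr
    intro x hx
    rw [Set.uIcc_of_le (by norm_num : (0:ℝ) ≤ 1)] at hx
    have hx0 : 0 ≤ x := hx.1
    have hx1 : 0 ≤ 1 - x := by linarith [hx.2]
    push_cast
    rw [show (a:ℂ) - 1 = ((a - 1 : ℝ) : ℂ) by push_cast; ring,
      show (b:ℂ) - 1 = ((b - 1 : ℝ) : ℂ) by push_cast; ring,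
      show (1:ℂ) - (x:ℂ) = ((1 - x : ℝ) : ℂ) by push_cast; ring,
      ← Complex.ofReal_cpow hx0, ← Complex.ofReal_cpow hx1]
    try push_cast
    try ring
  rw [hbeta, ← Complex.ofReal_add, Complex.Gamma_ofReal, Complex.Gamma_ofReal,
    Complex.Gamma_ofReal, ← Complex.ofReal_mul, ← Complex.ofReal_mul] at hG
  have hGr : Real.Gamma a * Real.Gamma b
      = Real.Gamma (a + b) * ∫ s in (0:ℝ)..1, s ^ (a - 1) * (1 - s) ^ (b - 1) :=
    mod_cast hG
  have hpos : 0 < Real.Gamma (a + b) := Real.Gamma_pos_of_pos (by linarith)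
  field_simp [hGr]
  rw [hGr]; ring

lemma tf_Gamma32 : Real.Gamma ((3:ℝ)/2) = Real.sqrt π / 2 := by
  rw [show (3:ℝ)/2 = 1/2 + 1 by norm_num, Real.Gamma_add_one (by norm_num),
    Real.Gamma_one_half_eq]
  ring

lemma tf_Gamma52 : Real.Gamma ((5:ℝ)/2) = 3 * Real.sqrt π / 4 := by
  rw [show (5:ℝ)/2 = 3/2 + 1 by norm_num, Real.Gamma_add_one (by norm_num), tf_Gamma32]
  ring

lemma tf_Gamma72 : Real.Gamma ((7:ℝ)/2) = 15 * Real.sqrt π / 8 := by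
  rw [show (7:ℝ)/2 = 5/2 + 1 by norm_num, Real.Gamma_add_one (by norm_num), tf_Gamma52]
  ring

lemma tf_Gamma4 : Real.Gamma (4:ℝ) = 6 := by
  rw [show (4:ℝ) = ((3:ℕ):ℝ) + 1 by norm_num, Real.Gamma_nat_eq_factorial]
  norm_num [Nat.factorial]

/-- The two Beta values we need. -/
lemma tf_J32 : ∫ s in (0:ℝ)..1, s ^ ((1:ℝ)/2) * (1 - s) ^ ((3:ℝ)/2) = π / 16 := by
  have h := tf_realBeta (3/2) (5/2) (by norm_num) (by norm_num)
  rw [show (3:ℝ)/2 - 1 = 1/2 by norm_num, show (5:ℝ)/2 - 1 = 3/2 by norm_num,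
    show (3:ℝ)/2 + 5/2 = 4 by norm_num, tf_Gamma32, tf_Gamma52, tf_Gamma4] at h
  rw [h]
  rw [show Real.sqrt π / 2 * (3 * Real.sqrt π / 4) = 3 * (Real.sqrt π * Real.sqrt π) / 8 by ring,
    Real.mul_self_sqrt Real.pi_pos.le]
  ring

lemma tf_J52 : ∫ s in (0:ℝ)..1, s ^ (-(1:ℝ)/2) * (1 - s) ^ ((5:ℝ)/2) = 5 * π / 16 := by
  have h := tf_realBeta (1/2) (7/2) (by norm_num) (by norm_num)
  rw [show (1:ℝ)/2 - 1 = -1/2 by norm_num, show (7:ℝ)/2 - 1 = 5/2 by norm_num,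
    show (1:ℝ)/2 + 7/2 = 4 by norm_num, Real.Gamma_one_half_eq, tf_Gamma72, tf_Gamma4] at h
  rw [h]
  rw [show Real.sqrt π * (15 * Real.sqrt π / 8) = 15 * (Real.sqrt π * Real.sqrt π) / 8 by ring,
    Real.mul_self_sqrt Real.pi_pos.le]
  ring



lemma tf_cont_rpow {p : ℝ} (hp : 0 ≤ p) : Continuous fun x : ℝ => x ^ p :=
  continuous_iff_continuousAt.2 fun x => Real.continuousAt_rpow_const x p (Or.inr hp)

lemma tf_radial (Z μ p : ℝ) (hZ : 0 < Z) (hμ : 0 < μ) (hp0 : 0 < p) (hp3 : p < 3) :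
    IntegrableOn (fun y => y ^ 2 * (max (Z / y - μ) 0) ^ p) (Set.Ioi (0:ℝ)) ∧
    ∫ y in Set.Ioi (0:ℝ), y ^ 2 * (max (Z / y - μ) 0) ^ p
      = μ ^ p * (Z / μ) ^ 3 * ∫ s in (0:ℝ)..1, s ^ (2 - p) * (1 - s) ^ p := by
  set R : ℝ := Z / μ with hRdef
  have hR : 0 < R := div_pos hZ hμ
  have hZR : Z = μ * R := by rw [hRdef]; field_simp [hμ.ne']
  set f : ℝ → ℝ := fun y => y ^ 2 * (max (Z / y - μ) 0) ^ p with hf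
  have hmeas : Measurable f := by
    apply Measurable.mul
    · exact (measurable_id.pow_const 2)
    · exact (tf_cont_rpow hp0.le).measurable.comp
        (((measurable_const.div measurable_id).sub measurable_const).max measurable_const)
  have h0 : ∀ y ∈ Set.Ioi R, f y = 0 := by
    intro y hy
    have hy' : R < y := hy
    have hy0 : 0 < y := hR.trans hy'
    have h1 : Z / y < μ := by
      rw [div_lt_iff₀ hy0, hZR]
      nlinarith
    have : max (Z / y - μ) 0 = 0 := max_eq_right (by linarith)
    simp [hf, this, Real.zero_rpow hp0.ne']
  have hIoc : ∀ y ∈ Set.Ioc (0:ℝ) R, f y = μ ^ p * (y ^ (2 - p) * (R - y) ^ p) := by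
    intro y hy
    have hy0 : 0 < y := hy.1
    have hyR : y ≤ R := hy.2
    have h1 : Z / y - μ = μ * ((R - y) / y) := by
      rw [hZR]; field_simp
    have h2 : max (Z / y - μ) 0 = μ * ((R - y) / y) := by
      rw [h1]
      exact max_eq_left (mul_nonneg hμ.le (div_nonneg (by linarith) hy0.le))
    have h3 : (μ * ((R - y) / y)) ^ p = μ ^ p * ((R - y) ^ p / y ^ p) := by
      rw [Real.mul_rpow hμ.le (div_nonneg (by linarith) hy0.le),
        Real.div_rpow (by linarith) hy0.le]
    have h4 : y ^ (2:ℕ) / y ^ p = y ^ (2 - p) := by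
      rw [← Real.rpow_natCast y 2, ← Real.rpow_sub hy0]
      norm_num
    calc f y = y ^ 2 * (μ * ((R - y) / y)) ^ p := by rw [hf]; simp only [h2]
    _ = μ ^ p * ((y ^ (2:ℕ) / y ^ p) * (R - y) ^ p) := by rw [h3]; ring
    _ = μ ^ p * (y ^ (2 - p) * (R - y) ^ p) := by rw [h4]
  -- integrability on Ioc 0 R
  have hmaj : IntegrableOn (fun y => μ ^ p * R ^ p * y ^ (2 - p)) (Set.Ioc (0:ℝ) R) := by
    have h1 : IntervalIntegrable (fun y : ℝ => y ^ (2 - p)) volume 0 R :=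
      intervalIntegral.intervalIntegrable_rpow' (by linarith)
    exact ((intervalIntegrable_iff_integrableOn_Ioc_of_le hR.le).1 h1).const_mul _
  have hintIoc : IntegrableOn f (Set.Ioc (0:ℝ) R) := by
    apply hmaj.mono' hmeas.aestronglyMeasurable
    filter_upwards [ae_restrict_mem measurableSet_Ioc] with y hy
    have hy0 : 0 < y := hy.1
    have hfy : f y = μ ^ p * (y ^ (2 - p) * (R - y) ^ p) := hIoc y hy
    have h5 : (R - y) ^ p ≤ R ^ p := Real.rpow_le_rpow (by linarith [hy.2]) (by linarith [hy0]) hp0.le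
    have hy2p : 0 ≤ y ^ (2 - p) := Real.rpow_nonneg hy0.le _
    have hRy : 0 ≤ (R - y) ^ p := Real.rpow_nonneg (by linarith [hy.2]) _
    have hnn : 0 ≤ f y := by
      rw [hfy]
      exact mul_nonneg (Real.rpow_nonneg hμ.le _) (mul_nonneg hy2p hRy)
    rw [Real.norm_eq_abs, abs_of_nonneg hnn, hfy]
    have h6 : y ^ (2 - p) * (R - y) ^ p ≤ y ^ (2 - p) * R ^ p :=
      mul_le_mul_of_nonneg_left h5 hy2p
    calc μ ^ p * (y ^ (2 - p) * (R - y) ^ p) ≤ μ ^ p * (y ^ (2 - p) * R ^ p) :=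
          mul_le_mul_of_nonneg_left h6 (Real.rpow_nonneg hμ.le p)
      _ = μ ^ p * R ^ p * y ^ (2 - p) := by ring
  have hintIoi : IntegrableOn f (Set.Ioi R) :=
    (integrableOn_congr_fun h0 measurableSet_Ioi).2 (integrableOn_zero)
  have hunion : Set.Ioc (0:ℝ) R ∪ Set.Ioi R = Set.Ioi 0 := Set.Ioc_union_Ioi_eq_Ioi hR.le
  have hint : IntegrableOn f (Set.Ioi (0:ℝ)) := by
    rw [← hunion]; exact hintIoc.union hintIoi
  refine ⟨hint, ?_⟩
  rw [← hunion, setIntegral_union (Set.Ioc_disjoint_Ioi le_rfl) measurableSet_Ioi hintIoc hintIoi,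
    setIntegral_congr_fun measurableSet_Ioi h0, integral_zero, add_zero,
    setIntegral_congr_fun measurableSet_Ioc hIoc, ← intervalIntegral.integral_of_le hR.le,
    intervalIntegral.integral_const_mul]
  -- substitution y = R s
  have hsub : R * ∫ s in (0:ℝ)..1, ((R * s) ^ (2 - p) * (R - R * s) ^ p)
      = ∫ y in (0:ℝ)..R, y ^ (2 - p) * (R - y) ^ p := by
    have h := intervalIntegral.smul_integral_comp_mul_left
      (f := fun y : ℝ => y ^ (2 - p) * (R - y) ^ p) (a := 0) (b := 1) R
    simpa only [smul_eq_mul, mul_zero, mul_one] using h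
  have hcongr : ∫ s in (0:ℝ)..1, ((R * s) ^ (2 - p) * (R - R * s) ^ p)
      = ∫ s in (0:ℝ)..1, (R ^ (2 - p) * R ^ p) * (s ^ (2 - p) * (1 - s) ^ p) := by
    apply intervalIntegral.integral_congr
    intro s hs
    rw [Set.uIcc_of_le (by norm_num : (0:ℝ) ≤ 1)] at hs
    have hs0 : 0 ≤ s := hs.1
    have hs1 : 0 ≤ 1 - s := by linarith [hs.2]
    show (R * s) ^ (2 - p) * (R - R * s) ^ p
        = R ^ (2 - p) * R ^ p * (s ^ (2 - p) * (1 - s) ^ p)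
    rw [Real.mul_rpow hR.le hs0, show R - R * s = R * (1 - s) by ring,
      Real.mul_rpow hR.le hs1]
    ring
  have hRR : R ^ (2 - p) * R ^ p = R ^ (2:ℕ) := by
    rw [← Real.rpow_add hR, ← Real.rpow_natCast R 2]
    norm_num
  rw [hcongr, intervalIntegral.integral_const_mul, hRR] at hsub
  rw [← hsub]
  ring




lemma tf_ball_vol : (volume (Metric.ball (0:E3) 1)).toReal = 4 * π / 3 := by
  rw [EuclideanSpace.volume_ball]
  have hcard : (Fintype.card (Fin 3) : ℝ) = 3 := by simp
  simp only [Fintype.card_fin]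
  have hG : Real.Gamma ((3:ℝ) / 2 + 1) = 3 * Real.sqrt π / 4 := by
    rw [Real.Gamma_add_one (by norm_num)]
    rw [show (3:ℝ)/2 = 1/2 + 1 by norm_num, Real.Gamma_add_one (by norm_num),
      Real.Gamma_one_half_eq]
    ring
  have h3 : ((3:ℕ):ℝ) / 2 + 1 = (3:ℝ)/2 + 1 := by norm_num
  rw [ENNReal.ofReal_one, one_pow, one_mul, h3, hG, ENNReal.toReal_ofReal (by positivity)]
  have hs : Real.sqrt π ^ 3 = π * Real.sqrt π := by
    rw [pow_succ, pow_two, Real.mul_self_sqrt Real.pi_pos.le]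
  rw [hs]
  have hsπ : Real.sqrt π ≠ 0 := ne_of_gt (Real.sqrt_pos.2 Real.pi_pos)
  field_simp

lemma tf_polar (f : ℝ → ℝ) :
    ∫ x : E3, f ‖x‖ = (4 * π) * ∫ y in Set.Ioi (0:ℝ), y ^ 2 * f y := by
  have h := MeasureTheory.integral_fun_norm_addHaar (volume : Measure E3) f
  rw [finrank_euclideanSpace_fin] at h
  rw [h, measureReal_def, tf_ball_vol]
  simp only [nsmul_eq_mul, smul_eq_mul, show (3-1 : ℕ) = 2 from rfl, Nat.cast_ofNat]
  ring




/-- The Thomas–Fermi energy of the Bohr atom equals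
`−(3/γ_TF)(π²/4)^{2/3} Z² N^{1/3}`; there is a unique minimizer, and it satisfies the
Euler–Lagrange equation `γ_TF ρ^{2/3} = (Z/|x| − μ)₊` with
`μ = (π²/4)^{2/3} γ_TF^{−1} Z² N^{−2/3}`. -/
theorem tf_bohr_atom (q : ℕ) (hq : 0 < q) (N Z : ℝ) (hN : 0 < N) (hZ : 0 < Z) :
    sInf {e | ∃ ρ : E3 → ℝ, InBohr N ρ ∧ e = bohrFun q Z ρ}
      = -(3 / gammaTF q) * (Real.pi ^ 2 / 4) ^ ((2 : ℝ) / 3) * Z ^ 2 * N ^ ((1 : ℝ) / 3) ∧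
    ∃ ρB : E3 → ℝ, InBohr N ρB ∧
      bohrFun q Z ρB = sInf {e | ∃ ρ : E3 → ℝ, InBohr N ρ ∧ e = bohrFun q Z ρ} ∧
      (∀ ρ : E3 → ℝ, InBohr N ρ →
        bohrFun q Z ρ = sInf {e | ∃ ρ' : E3 → ℝ, InBohr N ρ' ∧ e = bohrFun q Z ρ'} →
        ρ =ᵐ[volume] ρB) ∧
      (∀ᵐ x : E3 ∂volume,
        gammaTF q * ρB x ^ ((2 : ℝ) / 3)
          = max (Z / ‖x‖
              - (Real.pi ^ 2 / 4) ^ ((2 : ℝ) / 3) / gammaTF q * Z ^ 2 / N ^ ((2 : ℝ) / 3))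
              0) := by
  have hγ : 0 < gammaTF q := by
    have h1 : (0:ℝ) < 6 * Real.pi ^ 2 / q := by
      have : (0:ℝ) < (q:ℝ) := by exact_mod_cast hq
      positivity
    unfold gammaTF
    positivity
  have hγ32 : 0 < gammaTF q ^ ((3:ℝ)/2) := Real.rpow_pos_of_pos hγ _
  set c : ℝ := (gammaTF q ^ ((3:ℝ)/2))⁻¹ with hcdef
  have hc0 : 0 < c := inv_pos.2 hγ32
  set K : ℝ := Real.pi ^ 2 / 4 * Z ^ 3 / (gammaTF q ^ ((3:ℝ)/2) * N) with hKdef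
  have hK : 0 < K := by
    apply div_pos (by positivity) (by positivity)
  set μ : ℝ := K ^ ((2:ℝ)/3) with hμdef
  have hμ : 0 < μ := Real.rpow_pos_of_pos hK _
  -- power identities
  have hμK : μ ^ ((3:ℝ)/2) = K := by
    rw [hμdef, ← Real.rpow_mul hK.le]; norm_num
  have hμ3 : μ ^ (3:ℕ) = K ^ 2 := by
    rw [← Real.rpow_natCast μ 3, show ((3:ℕ):ℝ) = (3:ℝ)/2 * 2 by norm_num,
      Real.rpow_mul hμ.le, hμK, ← Real.rpow_natCast K 2]
    norm_num
  have hμ52 : μ ^ ((5:ℝ)/2) = K * μ := by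
    rw [show (5:ℝ)/2 = 3/2 + 1 by norm_num, Real.rpow_add hμ, hμK, Real.rpow_one]
  have hμeq : μ = (Real.pi ^ 2 / 4) ^ ((2:ℝ)/3) / gammaTF q * Z ^ 2 / N ^ ((2:ℝ)/3) := by
    have hZ3 : ((Z:ℝ) ^ (3:ℕ)) ^ ((2:ℝ)/3) = Z ^ (2:ℕ) := by
      rw [← Real.rpow_natCast Z 3, ← Real.rpow_mul hZ.le, ← Real.rpow_natCast Z 2]
      norm_num
    have hγ23 : (gammaTF q ^ ((3:ℝ)/2)) ^ ((2:ℝ)/3) = gammaTF q := by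
      rw [← Real.rpow_mul hγ.le]; norm_num
    rw [hμdef, hKdef, Real.div_rpow (by positivity) (by positivity),
      Real.mul_rpow (by positivity) (by positivity),
      Real.mul_rpow (by positivity) hN.le, hZ3, hγ23]
    ring
  have hNK : c * (Real.pi ^ 2 / 4 * Z ^ 3 / K) = N := by
    rw [hcdef, hKdef]
    field_simp
  -- the radial integrals
  have hrad32 := tf_radial Z μ ((3:ℝ)/2) hZ hμ (by norm_num) (by norm_num)
  have hrad52 := tf_radial Z μ ((5:ℝ)/2) hZ hμ (by norm_num) (by norm_num)
  rw [show (2:ℝ) - (3:ℝ)/2 = (1:ℝ)/2 by norm_num, tf_J32] at hrad32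
  rw [show (2:ℝ) - (5:ℝ)/2 = -(1:ℝ)/2 by norm_num, tf_J52] at hrad52
  have hZK : (Z:ℝ) ^ (3:ℕ) / K ^ 2 ≠ 0 := by positivity
  have e1 : μ ^ ((3:ℝ)/2) * (Z/μ) ^ (3:ℕ) * (π/16) = Real.pi / 16 * (Z ^ 3 / K) := by
    rw [div_pow, hμ3, hμK]
    field_simp
  have e2 : μ ^ ((5:ℝ)/2) * (Z/μ) ^ (3:ℕ) * (5*π/16) = 5 * Real.pi / 16 * (Z ^ 3 * μ / K) := by
    rw [div_pow, hμ3, hμ52]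
    field_simp
  -- the 3d integrals
  have hV32 : ∫ x : E3, (max (Z/‖x‖ - μ) 0) ^ ((3:ℝ)/2)
      = Real.pi ^ 2 / 4 * Z ^ 3 / K := by
    have h1 : ∫ x : E3, (max (Z/‖x‖ - μ) 0) ^ ((3:ℝ)/2)
        = (4*π) * ∫ y in Set.Ioi (0:ℝ), y ^ 2 * (max (Z/y - μ) 0) ^ ((3:ℝ)/2) :=
      tf_polar (fun y => (max (Z/y - μ) 0) ^ ((3:ℝ)/2))
    rw [h1, hrad32.2, e1]
    ring
  have hV52 : ∫ x : E3, (max (Z/‖x‖ - μ) 0) ^ ((5:ℝ)/2)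
      = 5 * Real.pi ^ 2 / 4 * (Z ^ 3 * μ / K) := by
    have h1 : ∫ x : E3, (max (Z/‖x‖ - μ) 0) ^ ((5:ℝ)/2)
        = (4*π) * ∫ y in Set.Ioi (0:ℝ), y ^ 2 * (max (Z/y - μ) 0) ^ ((5:ℝ)/2) :=
      tf_polar (fun y => (max (Z/y - μ) 0) ^ ((5:ℝ)/2))
    rw [h1, hrad52.2, e2]
    ring
  have hI32 : Integrable (fun x : E3 => (max (Z/‖x‖ - μ) 0) ^ ((3:ℝ)/2)) := by
    by_contra hcon
    rw [integral_undef hcon] at hV32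
    have : (0:ℝ) < Real.pi ^ 2 / 4 * Z ^ 3 / K := div_pos (by positivity) hK
    linarith
  have hI52 : Integrable (fun x : E3 => (max (Z/‖x‖ - μ) 0) ^ ((5:ℝ)/2)) := by
    by_contra hcon
    rw [integral_undef hcon] at hV52
    have : (0:ℝ) < 5 * Real.pi ^ 2 / 4 * (Z ^ 3 * μ / K) := by
      apply mul_pos (by positivity) (div_pos (by positivity) hK)
    linarith
  -- the minimizer
  set ρB : E3 → ℝ := fun x => c * (max (Z/‖x‖ - μ) 0) ^ ((3:ℝ)/2) with hρBdef
  have hρB0 : ∀ x, 0 ≤ ρB x := fun x =>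
    mul_nonneg hc0.le (Real.rpow_nonneg (le_max_right _ _) _)
  have hmρB : Measurable ρB := by
    apply Measurable.const_mul
    exact (tf_cont_rpow (by norm_num : (0:ℝ) ≤ 3/2)).measurable.comp
      (((measurable_const.div measurable_norm).sub measurable_const).max measurable_const)
  have hIρB : Integrable ρB := hI32.const_mul c
  have hρBN : ∫ x : E3, ρB x = N := by
    rw [hρBdef]
    rw [integral_const_mul, hV32, hNK]
  have hLpB : MemLp ρB (5/3 : ℝ≥0∞) volume := by
    have htop : (5/3 : ℝ≥0∞) ≠ ⊤ := (ENNReal.div_lt_top (by norm_num) (by norm_num)).ne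
    have key := memLp_norm_rpow_iff (μ := (volume : Measure E3)) (p := (5/3 : ℝ≥0∞))
      (q := (5/3 : ℝ≥0∞)) hmρB.aestronglyMeasurable (by norm_num) htop
    have hq53 : ((5/3 : ℝ≥0∞)).toReal = (5:ℝ)/3 := by
      rw [ENNReal.toReal_div]; norm_num
    have hdivone : (5/3 : ℝ≥0∞) / (5/3 : ℝ≥0∞) = 1 :=
      ENNReal.div_self (by norm_num) htop
    rw [hq53, hdivone, memLp_one_iff_integrable] at key
    apply key.1
    have heq : (fun x : E3 => ‖ρB x‖ ^ ((5:ℝ)/3))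
        = fun x : E3 => c ^ ((5:ℝ)/3) * (max (Z/‖x‖ - μ) 0) ^ ((5:ℝ)/2) := by
      funext x
      rw [Real.norm_eq_abs, abs_of_nonneg (hρB0 x)]
      simp only [hρBdef]
      rw [Real.mul_rpow hc0.le (Real.rpow_nonneg (le_max_right _ _) _),
        ← Real.rpow_mul (le_max_right _ _)]
      norm_num
    rw [heq]
    exact hI52.const_mul _
  have hInB : InBohr N ρB := ⟨hρB0, hLpB, hρBN⟩
  -- pointwise bounds
  have hpt : ∀ (a : ℝ), 0 ≤ a → ∀ x : E3,
      -((2:ℝ)/5 * c * (max (Z/‖x‖ - μ) 0) ^ ((5:ℝ)/2)) - μ * a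
        ≤ 3/5 * gammaTF q * a ^ ((5:ℝ)/3) - Z/‖x‖ * a ∧
      (3/5 * gammaTF q * a ^ ((5:ℝ)/3) - Z/‖x‖ * a
          = -((2:ℝ)/5 * c * (max (Z/‖x‖ - μ) 0) ^ ((5:ℝ)/2)) - μ * a ↔ a = ρB x) := by
    intro a ha x
    have hm := tf_master (gammaTF q) hγ (Z/‖x‖ - μ) a ha
    rw [← hcdef] at hm
    have hr : 3/5 * gammaTF q * a ^ ((5:ℝ)/3) - (Z/‖x‖ - μ) * a
        = 3/5 * gammaTF q * a ^ ((5:ℝ)/3) - Z/‖x‖ * a + μ * a := by ring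
    constructor
    · have := hm.1
      rw [hr] at this
      linarith
    · constructor
      · intro h
        have : 3/5 * gammaTF q * a ^ ((5:ℝ)/3) - (Z/‖x‖ - μ) * a
            = -(2/5 * c * (max (Z/‖x‖ - μ) 0) ^ ((5:ℝ)/2)) := by
          rw [hr]; linarith
        have := hm.2.1 this
        rw [hρBdef]
        exact this
      · intro h
        have h2 : a = c * (max (Z/‖x‖ - μ) 0) ^ ((3:ℝ)/2) := h
        have := hm.2.2 h2
        rw [hr] at this
        linarith
  -- value of the functional on the lower-bound profile
  have hGval : ∀ ρ : E3 → ℝ, Integrable ρ → (∫ x : E3, ρ x) = N →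
      ∫ x : E3, (-((2:ℝ)/5 * c * (max (Z/‖x‖ - μ) 0) ^ ((5:ℝ)/2)) - μ * ρ x)
        = -(3 * μ * N) := by
    intro ρ hρint hρN
    have hf1 : Integrable (fun x : E3 =>
        -((2:ℝ)/5 * c * (max (Z/‖x‖ - μ) 0) ^ ((5:ℝ)/2))) volume :=
      (hI52.const_mul ((2:ℝ)/5 * c)).neg
    have hf2 : Integrable (fun x : E3 => μ * ρ x) volume := hρint.const_mul μ
    rw [integral_sub hf1 hf2, integral_neg, integral_const_mul, integral_const_mul, hV52, hρN,
      ← hNK]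
    ring
  have hGint : ∀ ρ : E3 → ℝ, Integrable ρ →
      Integrable (fun x : E3 =>
        -((2:ℝ)/5 * c * (max (Z/‖x‖ - μ) 0) ^ ((5:ℝ)/2)) - μ * ρ x) := by
    intro ρ hρint
    exact ((hI52.const_mul ((2:ℝ)/5 * c)).neg).sub (hρint.const_mul μ)
  -- energy of the minimizer
  have hEB : bohrFun q Z ρB = -(3 * μ * N) := by
    have hFB : (fun x : E3 => 3/5 * gammaTF q * ρB x ^ ((5:ℝ)/3) - Z/‖x‖ * ρB x)
        = fun x : E3 => -((2:ℝ)/5 * c * (max (Z/‖x‖ - μ) 0) ^ ((5:ℝ)/2)) - μ * ρB x := by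
      funext x
      exact (hpt (ρB x) (hρB0 x) x).2.2 rfl
    show (∫ x : E3, (3/5 * gammaTF q * ρB x ^ ((5:ℝ)/3) - Z/‖x‖ * ρB x)) = -(3 * μ * N)
    rw [hFB]
    exact hGval ρB hIρB hρBN
  -- lower bound
  have hlb : ∀ ρ : E3 → ℝ, InBohr N ρ → -(3 * μ * N) ≤ bohrFun q Z ρ := by
    rintro ρ ⟨hρ0, hρLp, hρN⟩
    have hρint : Integrable ρ := by
      by_contra hcon
      rw [integral_undef hcon] at hρN
      exact hN.ne' hρN.symm
    by_cases hFi : Integrable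
        (fun x : E3 => 3/5 * gammaTF q * ρ x ^ ((5:ℝ)/3) - Z/‖x‖ * ρ x)
    · have hmono := integral_mono (hGint ρ hρint) hFi (fun x => (hpt (ρ x) (hρ0 x) x).1)
      rw [hGval ρ hρint hρN] at hmono
      exact hmono
    · show -(3*μ*N) ≤ ∫ x : E3, (3/5 * gammaTF q * ρ x ^ ((5:ℝ)/3) - Z/‖x‖ * ρ x)
      rw [integral_undef hFi]
      nlinarith [mul_pos (mul_pos (by norm_num : (0:ℝ) < 3) hμ) hN]
  -- the infimum
  have hmem : -(3 * μ * N) ∈ {e | ∃ ρ : E3 → ℝ, InBohr N ρ ∧ e = bohrFun q Z ρ} :=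
    ⟨ρB, hInB, hEB.symm⟩
  have hlb' : ∀ e ∈ {e | ∃ ρ : E3 → ℝ, InBohr N ρ ∧ e = bohrFun q Z ρ},
      -(3 * μ * N) ≤ e := by
    rintro e ⟨ρ, hρ, rfl⟩
    exact hlb ρ hρ
  have hsInf : sInf {e | ∃ ρ : E3 → ℝ, InBohr N ρ ∧ e = bohrFun q Z ρ} = -(3 * μ * N) :=
    le_antisymm (csInf_le ⟨_, hlb'⟩ hmem) (le_csInf ⟨_, hmem⟩ hlb')
  have hN13 : N ^ ((1:ℝ)/3) = N / N ^ ((2:ℝ)/3) := by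
    rw [eq_div_iff (ne_of_gt (Real.rpow_pos_of_pos hN _)), ← Real.rpow_add hN,
      show (1:ℝ)/3 + 2/3 = 1 by norm_num, Real.rpow_one]
  have hgoalval : -(3 / gammaTF q) * (Real.pi ^ 2 / 4) ^ ((2:ℝ)/3) * Z ^ 2 * N ^ ((1:ℝ)/3)
      = -(3 * μ * N) := by
    rw [hμeq, hN13]
    ring
  refine ⟨by rw [hsInf, hgoalval], ρB, hInB, by rw [hsInf, hEB], ?_, ?_⟩
  · -- uniqueness
    intro ρ hρ hval
    rw [hsInf] at hval
    obtain ⟨hρ0, hρLp, hρN⟩ := hρ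
    have hρint : Integrable ρ := by
      by_contra hcon
      rw [integral_undef hcon] at hρN
      exact hN.ne' hρN.symm
    have hFi : Integrable
        (fun x : E3 => 3/5 * gammaTF q * ρ x ^ ((5:ℝ)/3) - Z/‖x‖ * ρ x) := by
      by_contra hcon
      have : bohrFun q Z ρ = 0 := integral_undef hcon
      rw [this] at hval
      nlinarith [mul_pos (mul_pos (by norm_num : (0:ℝ) < 3) hμ) hN]
    have h0int : ∫ x : E3,
        ((3/5 * gammaTF q * ρ x ^ ((5:ℝ)/3) - Z/‖x‖ * ρ x)
          - (-((2:ℝ)/5 * c * (max (Z/‖x‖ - μ) 0) ^ ((5:ℝ)/2)) - μ * ρ x)) = 0 := by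
      rw [integral_sub hFi (hGint ρ hρint), hGval ρ hρint hρN]
      have : bohrFun q Z ρ = ∫ x : E3, (3/5 * gammaTF q * ρ x ^ ((5:ℝ)/3) - Z/‖x‖ * ρ x) := rfl
      rw [← this, hval]
      ring
    have hnn : ∀ x : E3, 0 ≤ (3/5 * gammaTF q * ρ x ^ ((5:ℝ)/3) - Z/‖x‖ * ρ x)
        - (-((2:ℝ)/5 * c * (max (Z/‖x‖ - μ) 0) ^ ((5:ℝ)/2)) - μ * ρ x) := by
      intro x
      have := (hpt (ρ x) (hρ0 x) x).1
      linarith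
    have hae := (integral_eq_zero_iff_of_nonneg (fun x => hnn x)
      (hFi.sub (hGint ρ hρint))).1 h0int
    filter_upwards [hae] with x hx
    have hx' : (3/5 * gammaTF q * ρ x ^ ((5:ℝ)/3) - Z/‖x‖ * ρ x)
        - (-((2:ℝ)/5 * c * (max (Z/‖x‖ - μ) 0) ^ ((5:ℝ)/2)) - μ * ρ x) = 0 := hx
    have : 3/5 * gammaTF q * ρ x ^ ((5:ℝ)/3) - Z/‖x‖ * ρ x
        = -((2:ℝ)/5 * c * (max (Z/‖x‖ - μ) 0) ^ ((5:ℝ)/2)) - μ * ρ x := by linarith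
    exact (hpt (ρ x) (hρ0 x) x).2.1 this
  · -- Euler-Lagrange equation
    rw [← hμeq]
    apply Filter.Eventually.of_forall
    intro x
    have hT0 : (0:ℝ) ≤ max (Z/‖x‖ - μ) 0 := le_max_right _ _
    have h1 : ρB x ^ ((2:ℝ)/3) = c ^ ((2:ℝ)/3) * (max (Z/‖x‖ - μ) 0) := by
      simp only [hρBdef]
      rw [Real.mul_rpow hc0.le (Real.rpow_nonneg hT0 _), ← Real.rpow_mul hT0]
      norm_num
    have h2 : c ^ ((2:ℝ)/3) = (gammaTF q)⁻¹ := by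
      rw [hcdef, Real.inv_rpow (Real.rpow_nonneg hγ.le _), ← Real.rpow_mul hγ.le]
      norm_num [Real.rpow_one]
    rw [h1, h2, ← mul_assoc, mul_inv_cancel₀ hγ.ne', one_mul]


end
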